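/- Let C be a small category, W a class of morphisms of C, and L : C ⥤ D a localization functor of C with respect to W. Then the left Kan extension functor L_! : (C ⥤ Type) ⥤ (D ⥤ Type) along L (the left adjoint of precomposition with L) is itself a localization functor of the functor category (C ⥤ Type) with respect to the class of those natural transformations that L_! sends to isomorphisms; in particular (D ⥤ Type) is equivalent to a reflective full subcategory of (C ⥤ Type). -/

import Mathlib

open CategoryTheory Limits

universe u

/-- Let `C` be a small category, `W` a class of morphisms of `C`, and
`L : C ⥤ D` a localization functor with respect to `W`. Then the left Kan extension
functor `L₁ : (C ⥤ Type) ⥤ (D ⥤ Type)` along `L` is itself a localization functor of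
`C ⥤ Type` with respect to the class of those natural transformations that `L₁` sends
to isomorphisms; in particular `D ⥤ Type` is equivalent to a reflective full
subcategory of `C ⥤ Type` (precomposition with `L` is fully faithful with a left
adjoint). -/
theorem statement1 {C : Type u} [SmallCategory C] {D : Type u} [SmallCategory D]
    (W : MorphismProperty C) (L : C ⥤ D) [L.IsLocalization W] :
    (Functor.lan L : (C ⥤ Type u) ⥤ (D ⥤ Type u)).IsLocalization
      ((MorphismProperty.isomorphisms (D ⥤ Type u)).inverseImage
        (Functor.lan L : (C ⥤ Type u) ⥤ (D ⥤ Type u))) ∧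
    Nonempty (Reflective ((Functor.whiskeringLeft C D (Type u)).obj L)) := by
  have hfull := Localization.full_whiskeringLeft L W (Type u)
  have hfaith := Localization.faithful_whiskeringLeft L W (Type u)
  exact ⟨(L.lanAdjunction (Type u)).isLocalization,
    ⟨{ L := Functor.lan L, adj := L.lanAdjunction (Type u) }⟩⟩
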